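/- Let S be a finite set of points in ℝ^d with |S| ≥ d + 1 such that the distance between any two distinct points of S is at least √2. If S is contained in a sphere of radius R ≤ 1 centered at a point c (that is, dist(c, p) = R for all p ∈ S), then c lies in the convex hull of S. -/

import Mathlib

open scoped Classical RealInnerProductSpace

noncomputable section

/-- A two-distance representation of a simple graph `G` in `ℝ^d`
(`= EuclideanSpace ℝ (Fin d)`) with distances `a` and `b`, `0 < a ≤ b`: adjacent vertices
are mapped to points at distance `a`, distinct non-adjacent vertices to points at
distance `b`. -/
def IsTwoDistRep {V : Type*} (G : SimpleGraph V) {d : ℕ}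
    (f : V → EuclideanSpace ℝ (Fin d)) (a b : ℝ) : Prop :=
  0 < a ∧ a ≤ b ∧
    (∀ u v, G.Adj u v → dist (f u) (f v) = a) ∧
    (∀ u v, u ≠ v → ¬ G.Adj u v → dist (f u) (f v) = b)

/-- The Euclidean representation number `dim^E_2(G)`: the smallest `d` such that `G` has a
two-distance representation in `ℝ^d`. -/
def dimE2 {V : Type*} (G : SimpleGraph V) : ℕ :=
  sInf {d | ∃ (f : V → EuclideanSpace ℝ (Fin d)) (a b : ℝ), IsTwoDistRep G f a b}

/-- The spherical representation number `dim^S_2(G)`: the smallest `d` such that `G` has a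
two-distance representation in `ℝ^d` whose image lies on a sphere. -/
def dimS2 {V : Type*} (G : SimpleGraph V) : ℕ :=
  sInf {d | ∃ (f : V → EuclideanSpace ℝ (Fin d)) (a b : ℝ)
      (c : EuclideanSpace ℝ (Fin d)) (r : ℝ),
    IsTwoDistRep G f a b ∧ ∀ v, dist c (f v) = r}

/-- The J-spherical representation number `dim^J_2(G)`: the smallest `d` such that `G` has a
two-distance representation in `ℝ^d` with distances `√2` and `b` (`√2 ≤ b`) whose image lies
on the unit sphere centered at the origin. -/
def dimJ2 {V : Type*} (G : SimpleGraph V) : ℕ :=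
  sInf {d | ∃ (f : V → EuclideanSpace ℝ (Fin d)) (b : ℝ),
    IsTwoDistRep G f (Real.sqrt 2) b ∧ ∀ v, ‖f v‖ = 1}

/-- `β_*(G)`: the second distance of the (unique) J-spherical representation of `G` in
dimension `dimJ2 G`. -/
def betaStar {V : Type*} (G : SimpleGraph V) : ℝ :=
  sInf {b : ℝ | ∃ f : V → EuclideanSpace ℝ (Fin (dimJ2 G)),
    IsTwoDistRep G f (Real.sqrt 2) b ∧ ∀ v, ‖f v‖ = 1}

/-- The Cayley–Menger matrix of a graph, with entries in `ℝ[X]`: the extra index `none`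
gives the row and column of `1`s (with `0` in the corner), and for distinct vertices `u, v`
the entry is `1` if they are adjacent and `X` (the variable `t`) otherwise. -/
def cmMatrix {V : Type*} [Fintype V] (G : SimpleGraph V) :
    Matrix (Option V) (Option V) (Polynomial ℝ) := fun i j =>
  match i, j with
  | none, none => 0
  | none, some _ => 1
  | some _, none => 1
  | some u, some v => if u = v then 0 else if G.Adj u v then 1 else Polynomial.X

/-- The Cayley–Menger polynomial `C_G(t)`. -/
def CG {V : Type*} [Fintype V] (G : SimpleGraph V) : Polynomial ℝ :=
  (cmMatrix G).det

/-- The matrix defining `M_G`. -/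
def mMatrix {V : Type*} [Fintype V] (G : SimpleGraph V) :
    Matrix V V (Polynomial ℝ) := fun u v =>
  if u = v then 0 else if G.Adj u v then 1 else Polynomial.X

/-- The polynomial `M_G(t)`. -/
def MG {V : Type*} [Fintype V] (G : SimpleGraph V) : Polynomial ℝ :=
  (mMatrix G).det

/-- `C_G` has a root greater than `1` (i.e. `τ₁(G) < ∞`). -/
def HasTau {V : Type*} [Fintype V] (G : SimpleGraph V) : Prop :=
  ∃ t : ℝ, 1 < t ∧ (CG G).eval t = 0

/-- `τ₁(G)`: the smallest root of `C_G` greater than `1` (junk value if none exists). -/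
def tau1 {V : Type*} [Fintype V] (G : SimpleGraph V) : ℝ :=
  sInf {t : ℝ | 1 < t ∧ (CG G).eval t = 0}

/-- `μ(G)`: the multiplicity of `τ₁(G)` as a root of `C_G`, and `0` if `C_G` has no
root greater than `1`. -/
def muG {V : Type*} [Fintype V] (G : SimpleGraph V) : ℕ :=
  if HasTau G then (CG G).rootMultiplicity (tau1 G) else 0

/-- `F_G = -M_G / (2 C_G)`, viewed as a rational function of `t`. -/
def FG {V : Type*} [Fintype V] (G : SimpleGraph V) : RatFunc ℝ :=
  RatFunc.mk (-(MG G)) (2 * CG G)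

/-- The rational function `F_G` has no pole at `τ₁(G)`: the denominator of the reduced
fraction does not vanish there. -/
def NoPoleAtTau {V : Type*} [Fintype V] (G : SimpleGraph V) : Prop :=
  (FG G).denom.eval (tau1 G) ≠ 0

/-- The value `F_G(τ₁(G))` of the rational function `F_G` at `τ₁(G)`. -/
def FGtau {V : Type*} [Fintype V] (G : SimpleGraph V) : ℝ :=
  (FG G).eval (RingHom.id ℝ) (tau1 G)

/-- The circumradius `R(G)` is finite: `τ₁(G) < ∞` and `F_G` has no pole at `τ₁(G)`.
(Then `R(G) = √(F_G(τ₁(G)))`.) -/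
def RGfin {V : Type*} [Fintype V] (G : SimpleGraph V) : Prop :=
  HasTau G ∧ NoPoleAtTau G

/-- The value of `F_G` at a point `t` which is not a root of `C_G`. -/
def FGval {V : Type*} [Fintype V] (G : SimpleGraph V) (t : ℝ) : ℝ :=
  -((MG G).eval t) / (2 * (CG G).eval t)

/-- `dim^S_2(G, R₀)`: the smallest `d` such that `G` has a two-distance representation in
`ℝ^d` with distances `1` and `b` whose image lies on a sphere of radius at most `R₀`. -/
def dimS2R {V : Type*} (G : SimpleGraph V) (R₀ : ℝ) : ℕ :=
  sInf {d | ∃ (f : V → EuclideanSpace ℝ (Fin d)) (b : ℝ)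
      (c : EuclideanSpace ℝ (Fin d)) (r : ℝ),
    IsTwoDistRep G f 1 b ∧ r ≤ R₀ ∧ ∀ v, dist c (f v) = r}

/-- The join of two graphs: their disjoint union together with all edges between the parts. -/
def graphJoin {V₁ V₂ : Type} (G₁ : SimpleGraph V₁) (G₂ : SimpleGraph V₂) :
    SimpleGraph (V₁ ⊕ V₂) :=
  SimpleGraph.fromRel fun x y =>
    (∃ a b, x = Sum.inl a ∧ y = Sum.inl b ∧ G₁.Adj a b) ∨
    (∃ a b, x = Sum.inr a ∧ y = Sum.inr b ∧ G₂.Adj a b) ∨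
    (∃ a b, x = Sum.inl a ∧ y = Sum.inr b)

/-- The join of a family of graphs: two vertices are adjacent iff they lie in different
summands or are adjacent within their common summand. -/
def familyJoin {ι : Type*} {V : ι → Type*} (G : ∀ i, SimpleGraph (V i)) :
    SimpleGraph (Σ i, V i) :=
  SimpleGraph.fromRel fun x y =>
    x.1 ≠ y.1 ∨ ∃ h : x.1 = y.1, (G y.1).Adj (h ▸ x.2) y.2

/-- A graph is join-indecomposable if it is not isomorphic to a join of two graphs,
each having at least one vertex. -/
def JoinIndecomposable {V : Type} (G : SimpleGraph V) : Prop :=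
  ¬ ∃ (V₁ V₂ : Type) (G₁ : SimpleGraph V₁) (G₂ : SimpleGraph V₂),
      Nonempty V₁ ∧ Nonempty V₂ ∧ Nonempty (G ≃g graphJoin G₁ G₂)

/-- `S` is of Type I in the linear subspace `L`: all points have norm `1`,
`|S| = dim L + 1`, the affine hull of `S` has dimension `dim L`, and the origin lies in the
relative interior of the convex hull of `S`. -/
def TypeI {d : ℕ} (L : Submodule ℝ (EuclideanSpace ℝ (Fin d)))
    (S : Finset (EuclideanSpace ℝ (Fin d))) : Prop :=
  (↑S : Set (EuclideanSpace ℝ (Fin d))) ⊆ (L : Set (EuclideanSpace ℝ (Fin d))) ∧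
  (∀ p ∈ S, ‖p‖ = 1) ∧
  S.card = Module.finrank ℝ L + 1 ∧
  Module.finrank ℝ (affineSpan ℝ (↑S : Set (EuclideanSpace ℝ (Fin d)))).direction =
    Module.finrank ℝ L ∧
  (0 : EuclideanSpace ℝ (Fin d)) ∈
    intrinsicInterior ℝ (convexHull ℝ (↑S : Set (EuclideanSpace ℝ (Fin d))))

/-- `S` is of Type II in the linear subspace `L`: all points have norm `1`,
`|S| = dim L`, the affine hull of `S` has dimension `dim L - 1`, and the origin does not lie
in the affine hull of `S`. -/
def TypeII {d : ℕ} (L : Submodule ℝ (EuclideanSpace ℝ (Fin d)))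
    (S : Finset (EuclideanSpace ℝ (Fin d))) : Prop :=
  (↑S : Set (EuclideanSpace ℝ (Fin d))) ⊆ (L : Set (EuclideanSpace ℝ (Fin d))) ∧
  (∀ p ∈ S, ‖p‖ = 1) ∧
  S.card = Module.finrank ℝ L ∧
  Module.finrank ℝ (affineSpan ℝ (↑S : Set (EuclideanSpace ℝ (Fin d)))).direction =
    Module.finrank ℝ L - 1 ∧
  (0 : EuclideanSpace ℝ (Fin d)) ∉ affineSpan ℝ (↑S : Set (EuclideanSpace ℝ (Fin d)))

/-- A J-spherical two-distance (JSTD) set with second distance `b`: a finite set on the unit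
sphere centered at the origin whose pairwise distances take exactly the two values `√2` and
`b`, where `b > √2`. -/
def IsJSTD {d : ℕ} (S : Finset (EuclideanSpace ℝ (Fin d))) (b : ℝ) : Prop :=
  (∀ p ∈ S, ‖p‖ = 1) ∧ Real.sqrt 2 < b ∧
  (∀ p ∈ S, ∀ q ∈ S, p ≠ q → dist p q = Real.sqrt 2 ∨ dist p q = b) ∧
  (∃ p ∈ S, ∃ q ∈ S, dist p q = Real.sqrt 2) ∧
  (∃ p ∈ S, ∃ q ∈ S, dist p q = b)

/-- If `S ⊆ ℝ^d` has at least `d + 1` points with pairwise distances at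
least `√2` and lies on a sphere of radius `R ≤ 1` centered at `c`, then `c` lies in the
convex hull of `S`. -/
lemma aux_li_of_inner_nonpos {d : ℕ} {ι : Type*} [Fintype ι]
    (v : ι → EuclideanSpace ℝ (Fin d))
    (f : EuclideanSpace ℝ (Fin d) →L[ℝ] ℝ)
    (hf : ∀ i, 0 < f (v i))
    (hv : ∀ i j, i ≠ j → ⟪v i, v j⟫ ≤ 0) :
    LinearIndependent ℝ v := by
  rw [linearIndependent_iff']
  intro s g hsum i hi
  set P := s.filter (fun i => 0 < g i) with hP
  set N := s.filter (fun i => ¬ 0 < g i) with hN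
  have hunion : P ∪ N = s := Finset.filter_union_filter_not_eq _ s
  have hdisj : Disjoint P N := Finset.disjoint_filter_filter_not s s _
  have hzsum : (∑ i ∈ P, g i • v i) + (∑ i ∈ N, g i • v i) = 0 := by
    rw [← Finset.sum_union hdisj, hunion]; exact hsum
  set z := ∑ i ∈ P, g i • v i with hz
  have hz2 : z = -∑ i ∈ N, g i • v i := by
    rw [hz, eq_neg_iff_add_eq_zero]; exact hzsum
  have hzz : ⟪z, z⟫ ≤ 0 := by
    have e1 : ⟪z, z⟫ = -⟪z, ∑ i ∈ N, g i • v i⟫ := by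
      nth_rewrite 2 [hz2]
      rw [inner_neg_right]
    rw [e1, hz, sum_inner, neg_nonpos]
    apply Finset.sum_nonneg
    intro a ha
    rw [real_inner_smul_left, inner_sum]
    apply mul_nonneg (le_of_lt (by rw [hP, Finset.mem_filter] at ha; exact ha.2))
    apply Finset.sum_nonneg
    intro b hb
    rw [real_inner_smul_right]
    have hab : a ≠ b := by
      rintro rfl
      rw [hP, Finset.mem_filter] at ha
      rw [hN, Finset.mem_filter] at hb
      exact hb.2 ha.2
    have h1 : g b ≤ 0 := by
      rw [hN, Finset.mem_filter] at hb; exact le_of_not_gt hb.2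
    nlinarith [hv a b hab, h1]
  have hz0 : z = 0 := real_inner_self_nonpos.mp hzz
  have hPfz : ∑ i ∈ P, g i * f (v i) = 0 := by
    have : f z = 0 := by rw [hz0, map_zero]
    rw [hz, map_sum] at this
    simpa [map_smul] using this
  have hPempty : P = ∅ := by
    by_contra hne
    have hpos : 0 < ∑ i ∈ P, g i * f (v i) := by
      apply Finset.sum_pos
      · intro a ha
        rw [hP, Finset.mem_filter] at ha
        exact mul_pos ha.2 (hf a)
      · exact Finset.nonempty_iff_ne_empty.mpr hne
    exact absurd hPfz (ne_of_gt hpos)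
  have hsN : s = N := by rw [← hunion, hPempty, Finset.empty_union]
  have hfsum : ∑ j ∈ s, g j * f (v j) = 0 := by
    have : f (∑ j ∈ s, g j • v j) = 0 := by rw [hsum, map_zero]
    rw [map_sum] at this
    simpa [map_smul] using this
  have hnonpos : ∀ j ∈ s, g j * f (v j) ≤ 0 := by
    intro j hj
    have : j ∈ N := hsN ▸ hj
    rw [hN, Finset.mem_filter] at this
    exact mul_nonpos_of_nonpos_of_nonneg (le_of_not_gt this.2) (le_of_lt (hf j))
  have := (Finset.sum_eq_zero_iff_of_nonpos hnonpos).mp hfsum i hi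
  rcases mul_eq_zero.mp this with h | h
  · exact h
  · exact absurd h (ne_of_gt (hf i))

theorem center_mem_convexHull (d : ℕ) (S : Finset (EuclideanSpace ℝ (Fin d)))
    (hcard : d + 1 ≤ S.card)
    (hdist : ∀ p ∈ S, ∀ q ∈ S, p ≠ q → Real.sqrt 2 ≤ dist p q)
    (c : EuclideanSpace ℝ (Fin d)) (R : ℝ) (hR : R ≤ 1)
    (hS : ∀ p ∈ S, dist c p = R) :
    c ∈ convexHull ℝ (↑S : Set (EuclideanSpace ℝ (Fin d))) := by
  by_contra hc
  have hclosed : IsClosed (convexHull ℝ (↑S : Set (EuclideanSpace ℝ (Fin d)))) :=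
    (S.finite_toSet.isCompact_convexHull ℝ).isClosed
  obtain ⟨f, u, hfu, hfp⟩ :=
    geometric_hahn_banach_point_closed (convex_convexHull ℝ _) hclosed hc
  have hSne : S.Nonempty := Finset.card_pos.mp (by omega)
  have hR0 : 0 ≤ R := by
    obtain ⟨p, hp⟩ := hSne
    rw [← hS p hp]; exact dist_nonneg
  set v : S → EuclideanSpace ℝ (Fin d) := fun p => (p : EuclideanSpace ℝ (Fin d)) - c with hv
  have hfv : ∀ i, 0 < f (v i) := by
    intro i
    have h1 : u < f i := hfp _ (subset_convexHull ℝ _ i.2)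
    have : f (v i) = f i - f c := by rw [hv]; simp [map_sub]
    linarith
  have hinner : ∀ i j : S, i ≠ j → ⟪v i, v j⟫ ≤ 0 := by
    intro i j hij
    have hne : (i : EuclideanSpace ℝ (Fin d)) ≠ j := fun h => hij (Subtype.ext h)
    have hd := hdist i i.2 j j.2 hne
    have h2 : 2 ≤ (dist (i : EuclideanSpace ℝ (Fin d)) j) ^ 2 := by
      nlinarith [Real.sq_sqrt (show (0:ℝ) ≤ 2 by norm_num), Real.sqrt_nonneg 2, dist_nonneg (x := (i : EuclideanSpace ℝ (Fin d))) (y := (j : EuclideanSpace ℝ (Fin d)))]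
    have hni : ‖v i‖ = R := by
      rw [hv]; simp only; rw [← dist_eq_norm, dist_comm]; exact hS i i.2
    have hnj : ‖v j‖ = R := by
      rw [hv]; simp only; rw [← dist_eq_norm, dist_comm]; exact hS j j.2
    have hexp : (dist (i : EuclideanSpace ℝ (Fin d)) j) ^ 2
        = R ^ 2 - 2 * ⟪v i, v j⟫ + R ^ 2 := by
      rw [dist_eq_norm, show ((i : EuclideanSpace ℝ (Fin d)) - j) = v i - v j by
        rw [hv]; simp, norm_sub_sq_real, hni, hnj]
    nlinarith
  have hli := aux_li_of_inner_nonpos v f hfv hinner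
  have hcard2 := hli.fintype_card_le_finrank
  rw [finrank_euclideanSpace_fin, Fintype.card_coe] at hcard2
  omega
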